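/- arXiv:1505.02179 — 2 statements merged into one kernel-verified Lean document; each statement's English description precedes it below -/
import Mathlib

section
/- Let 0 < q < 1, u, v > 0, and n ∈ ℕ. Then N_q(x^n)(u;v) = ((1-q)^n / v^{n+1}) u^n [n]_q!, where [n]_q! = ∏_{k=1}^n (1-q^k)/(1-q) and N_q is the series-defined q-Natural transform. -/
/-- The q-Pochhammer symbol `(a;q)_n`. -/
noncomputable def qPoch (q a : ℝ) (n : ℕ) : ℝ := ∏ k ∈ Finset.range n, (1 - a * q ^ k)

/-- `(a;q)_∞`. -/
noncomputable def qPochInf (q a : ℝ) : ℝ := ∏' k : ℕ, (1 - a * q ^ k)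

/-- The first-type q-Natural transform. -/
noncomputable def qNatural (q : ℝ) (f : ℝ → ℝ) (u v : ℝ) : ℝ :=
  qPochInf q q / v * ∑' k : ℕ, q ^ k * f (u / v * q ^ k) / qPoch q q k

/-- The q-factorial `[n]_q! = ∏_{k=1}^n (1-q^k)/(1-q)`. -/
noncomputable def qFactorial (q : ℝ) (n : ℕ) : ℝ :=
  ∏ k ∈ Finset.Icc 1 n, (1 - q ^ k) / (1 - q)

open Filter Topology

/-- The `q`-exponential-type series `∑ z^k/(q;q)_k`. -/
noncomputable def qE (q z : ℝ) : ℝ := ∑' k : ℕ, z ^ k / qPoch q q k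

section aux

variable {q : ℝ}

lemma one_sub_q_pow_pos (hq0 : 0 < q) (hq1 : q < 1) (k : ℕ) : 0 < 1 - q * q ^ k := by
  have h1 : q ^ k ≤ 1 := pow_le_one₀ hq0.le hq1.le
  nlinarith

lemma qPoch_pos (hq0 : 0 < q) (hq1 : q < 1) (k : ℕ) : 0 < qPoch q q k :=
  Finset.prod_pos fun j _ => one_sub_q_pow_pos hq0 hq1 j

lemma qPoch_succ (k : ℕ) : qPoch q q (k + 1) = qPoch q q k * (1 - q * q ^ k) :=
  Finset.prod_range_succ _ _

lemma qE_summable (hq0 : 0 < q) (hq1 : q < 1) {z : ℝ} (hz0 : 0 < z) (hz1 : z < 1) :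
    Summable (fun k : ℕ => z ^ k / qPoch q q k) := by
  apply summable_of_ratio_test_tendsto_lt_one hz1
  · filter_upwards with k
    exact div_ne_zero (pow_pos hz0 k).ne' (qPoch_pos hq0 hq1 k).ne'
  · have heq : (fun k : ℕ => ‖z ^ (k + 1) / qPoch q q (k + 1)‖ / ‖z ^ k / qPoch q q k‖)
        = fun k : ℕ => z / (1 - q * q ^ k) := by
      funext k
      have hP := qPoch_pos hq0 hq1 k
      have hc := one_sub_q_pow_pos hq0 hq1 k
      have hzk := pow_pos hz0 k
      rw [qPoch_succ, Real.norm_eq_abs, Real.norm_eq_abs,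
        abs_of_pos (by positivity), abs_of_pos (by positivity)]
      field_simp
      ring
    rw [heq]
    have h1 : Filter.Tendsto (fun k : ℕ => 1 - q * q ^ k) atTop (𝓝 (1 - q * 0)) :=
      tendsto_const_nhds.sub
        (tendsto_const_nhds.mul (tendsto_pow_atTop_nhds_zero_of_lt_one hq0.le hq1))
    have := (tendsto_const_nhds (x := z)).div h1 (by norm_num)
    refine (?_ : Tendsto ((fun _ => z) / fun k : ℕ => 1 - q * q ^ k) atTop (𝓝 z))
    simpa using this

lemma qE_funeq (hq0 : 0 < q) (hq1 : q < 1) {z : ℝ} (hz0 : 0 < z) (hz1 : z < 1) :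
    qE q (q * z) = (1 - z) * qE q z := by
  have h1 : Summable (fun k : ℕ => z ^ k / qPoch q q k) := qE_summable hq0 hq1 hz0 hz1
  have hqz0 : 0 < q * z := mul_pos hq0 hz0
  have hqz1 : q * z < 1 := by nlinarith
  have h2 : Summable (fun k : ℕ => (q * z) ^ k / qPoch q q k) := qE_summable hq0 hq1 hqz0 hqz1
  have key : qE q z - qE q (q * z) = z * qE q z := by
    rw [qE, qE, ← Summable.tsum_sub h1 h2]
    rw [Summable.tsum_eq_zero_add (h1.sub h2)]
    have h0 : z ^ 0 / qPoch q q 0 - (q * z) ^ 0 / qPoch q q 0 = 0 := by simp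
    have hstep : ∀ k : ℕ, z ^ (k + 1) / qPoch q q (k + 1)
        - (q * z) ^ (k + 1) / qPoch q q (k + 1) = z * (z ^ k / qPoch q q k) := by
      intro k
      have hP := qPoch_pos hq0 hq1 k
      have hc := one_sub_q_pow_pos hq0 hq1 k
      rw [qPoch_succ]
      field_simp
      ring
    rw [h0, tsum_congr hstep, tsum_mul_left, zero_add]
  linarith [key]

lemma qE_pow_eq (hq0 : 0 < q) (hq1 : q < 1) (m : ℕ) :
    qE q (q ^ (m + 1)) = qPoch q q m * qE q q := by
  induction m with
  | zero => simp [qPoch]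
  | succ m ih =>
    have hz0 : (0:ℝ) < q ^ (m + 1) := pow_pos hq0 _
    have hz1 : q ^ (m + 1) < 1 := pow_lt_one₀ hq0.le hq1 (Nat.succ_ne_zero m)
    have : (q : ℝ) ^ (m + 1 + 1) = q * q ^ (m + 1) := by ring
    rw [this, qE_funeq hq0 hq1 hz0 hz1, ih, qPoch_succ]
    have : (q : ℝ) ^ (m + 1) = q * q ^ m := by ring
    rw [this]
    ring

lemma qE_one_le (hq0 : 0 < q) (hq1 : q < 1) {z : ℝ} (hz0 : 0 < z) (hz1 : z < 1) :
    1 ≤ qE q z := by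
  have h1 := qE_summable hq0 hq1 hz0 hz1
  have := Summable.le_tsum h1 0
    (fun j _ => div_nonneg (pow_nonneg hz0.le j) (qPoch_pos hq0 hq1 j).le)
  simpa [qE, qPoch] using this

set_option maxHeartbeats 1000000 in
lemma qE_tendsto (hq0 : 0 < q) (hq1 : q < 1) :
    Tendsto (fun m : ℕ => qE q (q ^ (m + 1))) atTop (𝓝 1) := by
  have hEq := qE_summable hq0 hq1 hq0 hq1
  have hshift : Summable (fun k : ℕ => q ^ (k + 1) / qPoch q q (k + 1)) :=
    (summable_nat_add_iff (f := fun k : ℕ => q ^ k / qPoch q q k) 1).mpr hEq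
  set C : ℝ := qE q q - 1 with hC
  have hupper : ∀ m : ℕ, qE q (q ^ (m + 1)) ≤ 1 + q ^ m * C := by
    intro m
    have hz0 : (0:ℝ) < q ^ (m + 1) := pow_pos hq0 _
    have hz1 : q ^ (m + 1) < 1 := pow_lt_one₀ hq0.le hq1 (Nat.succ_ne_zero m)
    have hsum := qE_summable hq0 hq1 hz0 hz1
    have hsum' : Summable (fun k : ℕ => (q ^ (m + 1)) ^ (k + 1) / qPoch q q (k + 1)) :=
      (summable_nat_add_iff (f := fun k : ℕ => (q ^ (m + 1)) ^ k / qPoch q q k) 1).mpr hsum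
    have hterm : ∀ k : ℕ, (q ^ (m + 1)) ^ (k + 1) / qPoch q q (k + 1)
        ≤ q ^ m * (q ^ (k + 1) / qPoch q q (k + 1)) := by
      intro k
      have hP := qPoch_pos hq0 hq1 (k + 1)
      have hexp : m + (k + 1) ≤ (m + 1) * (k + 1) := by
        have h := Nat.le_mul_of_pos_right m (show 0 < k + 1 by omega)
        calc m + (k + 1) ≤ m * (k + 1) + (k + 1) := by omega
          _ = (m + 1) * (k + 1) := by ring
      have hnum : (q ^ (m + 1)) ^ (k + 1) ≤ q ^ m * q ^ (k + 1) := by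
        rw [← pow_mul, ← pow_add]
        exact pow_le_pow_of_le_one hq0.le hq1.le hexp
      rw [← mul_div_assoc]
      exact (div_le_div_iff_of_pos_right hP).mpr hnum
    have htle : (∑' k : ℕ, (q ^ (m + 1)) ^ (k + 1) / qPoch q q (k + 1))
        ≤ ∑' k : ℕ, q ^ m * (q ^ (k + 1) / qPoch q q (k + 1)) :=
      Summable.tsum_le_tsum hterm hsum' (hshift.mul_left _)
    have hE1 : qE q (q ^ (m + 1)) = 1 + ∑' k : ℕ, (q ^ (m + 1)) ^ (k + 1) / qPoch q q (k + 1) := by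
      rw [qE, Summable.tsum_eq_zero_add hsum]; simp [qPoch]
    have hE2 : qE q q = 1 + ∑' k : ℕ, q ^ (k + 1) / qPoch q q (k + 1) := by
      rw [qE, Summable.tsum_eq_zero_add hEq]; simp [qPoch]
    rw [hE1]
    rw [tsum_mul_left] at htle
    have : (∑' k : ℕ, q ^ (k + 1) / qPoch q q (k + 1)) = C := by rw [hC, hE2]; ring
    rw [this] at htle
    linarith
  have hlower : ∀ m : ℕ, (1:ℝ) ≤ qE q (q ^ (m + 1)) := fun m =>
    qE_one_le hq0 hq1 (pow_pos hq0 _) (pow_lt_one₀ hq0.le hq1 (Nat.succ_ne_zero m))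
  have hlim : Tendsto (fun m : ℕ => 1 + q ^ m * C) atTop (𝓝 1) := by
    have h := (tendsto_const_nhds (x := (1:ℝ)) (f := atTop (α := ℕ))).add
      ((tendsto_pow_atTop_nhds_zero_of_lt_one hq0.le hq1).mul_const C)
    simpa using h
  exact tendsto_of_tendsto_of_tendsto_of_le_of_le tendsto_const_nhds hlim hlower hupper

lemma qPochInf_multipliable (hq0 : 0 < q) (hq1 : q < 1) :
    Multipliable (fun k : ℕ => 1 - q * q ^ k) := by
  have hlogsum : Summable fun k : ℕ => Real.log (1 - q * q ^ k) := by
    apply Summable.of_norm_bounded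
      ((summable_geometric_of_lt_one hq0.le hq1).mul_left (q / (1 - q)))
    intro k
    have hc := one_sub_q_pow_pos hq0 hq1 k
    have hx0 : 0 < q * q ^ k := by positivity
    have hlog : Real.log (1 - q * q ^ k) ≤ 0 := Real.log_nonpos hc.le (by nlinarith)
    rw [Real.norm_eq_abs, abs_of_nonpos hlog]
    have h1 : -Real.log (1 - q * q ^ k) ≤ (1 - q * q ^ k)⁻¹ - 1 := by
      have h := Real.log_le_sub_one_of_pos (inv_pos.mpr hc)
      rw [Real.log_inv] at h
      linarith
    have h2 : (1 - q * q ^ k)⁻¹ - 1 = q * q ^ k / (1 - q * q ^ k) := by field_simp; ring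
    have h3 : q * q ^ k / (1 - q * q ^ k) ≤ q * q ^ k / (1 - q) := by
      have hqk : q * q ^ k ≤ q * 1 := by nlinarith [pow_le_one₀ hq0.le hq1.le (n := k)]
      exact div_le_div_of_nonneg_left hx0.le (by linarith) (by linarith)
    calc -Real.log (1 - q * q ^ k) ≤ (1 - q * q ^ k)⁻¹ - 1 := h1
      _ = q * q ^ k / (1 - q * q ^ k) := h2
      _ ≤ q * q ^ k / (1 - q) := h3
      _ = q / (1 - q) * q ^ k := by ring
  exact Real.multipliable_of_summable_log
    (fun k => one_sub_q_pow_pos hq0 hq1 k) hlogsum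

lemma qPochInf_mul_qE (hq0 : 0 < q) (hq1 : q < 1) : qPochInf q q * qE q q = 1 := by
  have hm := qPochInf_multipliable hq0 hq1
  have h1 : Tendsto (fun m : ℕ => qPoch q q m) atTop (𝓝 (qPochInf q q)) :=
    hm.hasProd.tendsto_prod_nat
  have h2 : Tendsto (fun m : ℕ => qPoch q q m * qE q q) atTop (𝓝 (qPochInf q q * qE q q)) :=
    h1.mul_const _
  have h3 : (fun m : ℕ => qPoch q q m * qE q q) = fun m : ℕ => qE q (q ^ (m + 1)) :=
    funext fun m => (qE_pow_eq hq0 hq1 m).symm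
  rw [h3] at h2
  exact tendsto_nhds_unique h2 (qE_tendsto hq0 hq1)

lemma qPoch_eq_Icc (n : ℕ) : qPoch q q n = ∏ k ∈ Finset.Icc 1 n, (1 - q ^ k) := by
  induction n with
  | zero => simp [qPoch]
  | succ n ih =>
    rw [qPoch_succ, ih, Finset.prod_Icc_succ_top (Nat.one_le_iff_ne_zero.mpr (Nat.succ_ne_zero n)),
      pow_succ']

end aux

/-- For `0 < q < 1`, `u, v > 0` and `n ∈ ℕ`,
`N_q(x^n)(u;v) = ((1-q)^n/v^{n+1}) u^n [n]_q!`. -/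
theorem qNatural_pow (q u v : ℝ) (n : ℕ) (hq0 : 0 < q) (hq1 : q < 1)
    (hu : 0 < u) (hv : 0 < v) :
    qNatural q (fun x => x ^ n) u v
      = (1 - q) ^ n / v ^ (n + 1) * u ^ n * qFactorial q n := by
  have hterm : ∀ k : ℕ, q ^ k * (u / v * q ^ k) ^ n / qPoch q q k
      = (u / v) ^ n * ((q ^ (n + 1)) ^ k / qPoch q q k) := by
    intro k
    have hpow : q ^ k * ((q : ℝ) ^ k) ^ n = (q ^ (n + 1)) ^ k := by
      rw [← pow_mul, ← pow_add, ← pow_mul]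
      congr 1
      ring
    rw [mul_pow, show q ^ k * ((u / v) ^ n * ((q:ℝ) ^ k) ^ n)
        = (u / v) ^ n * (q ^ k * ((q:ℝ) ^ k) ^ n) from by ring, hpow, mul_div_assoc]
  simp only [qNatural]
  rw [tsum_congr hterm, tsum_mul_left]
  have hE : (∑' k : ℕ, (q ^ (n + 1)) ^ k / qPoch q q k) = qPoch q q n * qE q q :=
    qE_pow_eq hq0 hq1 n
  rw [hE]
  have hprod := qPochInf_mul_qE hq0 hq1
  rw [show qPochInf q q / v * ((u / v) ^ n * (qPoch q q n * qE q q))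
      = qPoch q q n * (u / v) ^ n / v * (qPochInf q q * qE q q) from by ring, hprod, mul_one]
  rw [qPoch_eq_Icc, qFactorial, Finset.prod_div_distrib, Finset.prod_const, Nat.card_Icc]
  simp only [Nat.add_sub_cancel]
  have hq1' : (1 : ℝ) - q ≠ 0 := by linarith
  have hv' : v ≠ 0 := hv.ne'
  field_simp
  rw [div_pow, pow_succ, mul_comm (v ^ n) v, ← mul_assoc, mul_assoc _ (u ^ n / v ^ n) v,
    mul_comm (u ^ n / v ^ n) v, ← mul_assoc, mul_assoc _ (u ^ n / v ^ n), div_mul_cancel₀ _ (pow_ne_zero n hv')]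
end

section
/- Let 0 < q < 1, a ∈ ℝ, and u, v > 0 with |a u| < v. Define cos_q(t) = (e_q(it) + e_q(-it))/2. Then N_q(cos_q(a x))(u;v) = v/(v² + a² u²). -/
open Complex

set_option maxHeartbeats 1000000

/-- The complex q-Pochhammer symbol `(a;q)_n`. -/
noncomputable def qPochC (q a : ℂ) (n : ℕ) : ℂ := ∏ k ∈ Finset.range n, (1 - a * q ^ k)

/-- The complex q-exponential `e_q(t) = ∑_{n≥0} t^n/(q;q)_n`. -/
noncomputable def qExpC (q t : ℂ) : ℂ := ∑' n : ℕ, t ^ n / qPochC q q n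

/-- `cos_q(t) = (e_q(it) + e_q(-it))/2`. -/
noncomputable def qCos (q t : ℂ) : ℂ := (qExpC q (I * t) + qExpC q (-(I * t))) / 2

/-- The first-type q-Natural transform of a complex-valued function. -/
noncomputable def qNaturalC (q : ℝ) (f : ℝ → ℂ) (u v : ℝ) : ℂ :=
  (∏' k : ℕ, (1 - (q : ℂ) * (q : ℂ) ^ k)) / (v : ℂ) *
    ∑' k : ℕ, (q : ℂ) ^ k * f (u / v * q ^ k) / qPochC q q k

section Auxiliary

variable {q : ℝ} {z : ℂ}

noncomputable def PrR (q : ℝ) (n : ℕ) : ℝ := ∏ k ∈ Finset.range n, (1 - q ^ (k+1))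
noncomputable def CC (q : ℝ) : ℝ := ∏' k : ℕ, (1 - q ^ (k+1))

variable {q : ℝ}

lemma qPochC_eq (q : ℝ) (n : ℕ) : qPochC q q n = ((PrR q n : ℝ) : ℂ) := by
  unfold qPochC PrR
  push_cast
  exact Finset.prod_congr rfl fun k _ => by push_cast; ring

lemma factor_pos (hq0 : 0 < q) (hq1 : q < 1) (k : ℕ) : 0 < 1 - q ^ (k+1) :=
  sub_pos.mpr (pow_lt_one₀ hq0.le hq1 (Nat.succ_ne_zero k))

lemma factor_lt_one (hq0 : 0 < q) (k : ℕ) : 1 - q ^ (k+1) < 1 := by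
  have : 0 < q ^ (k+1) := pow_pos hq0 _
  linarith

lemma PrR_pos (hq0 : 0 < q) (hq1 : q < 1) (n : ℕ) : 0 < PrR q n :=
  Finset.prod_pos fun k _ => factor_pos hq0 hq1 k

lemma qPochC_ne (hq0 : 0 < q) (hq1 : q < 1) (n : ℕ) : qPochC q q n ≠ 0 := by
  rw [qPochC_eq]
  exact_mod_cast (PrR_pos hq0 hq1 n).ne'

lemma summable_log_factor (hq0 : 0 < q) (hq1 : q < 1) :
    Summable (fun k : ℕ => Real.log (1 - q ^ (k+1))) := by
  have hb : ∀ k : ℕ, ‖Real.log (1 - q ^ (k+1))‖ ≤ (q / (1-q)) * q ^ k := by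
    intro k
    have hx : 0 < 1 - q ^ (k+1) := factor_pos hq0 hq1 k
    have hlt : 1 - q ≤ 1 - q ^ (k+1) := by
      have : q ^ (k+1) ≤ q := by
        calc q ^ (k+1) ≤ q ^ 1 := pow_le_pow_of_le_one hq0.le hq1.le (by omega)
        _ = q := pow_one q
      linarith
    have hlog0 : Real.log (1 - q ^ (k+1)) ≤ 0 :=
      Real.log_nonpos (by linarith) (by linarith [pow_pos hq0 (k+1)])
    rw [Real.norm_eq_abs, abs_of_nonpos hlog0]
    have : -Real.log (1 - q ^ (k+1)) = Real.log (1 - q ^ (k+1))⁻¹ := (Real.log_inv _).symm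
    rw [this]
    have h1 : Real.log (1 - q ^ (k+1))⁻¹ ≤ (1 - q ^ (k+1))⁻¹ - 1 :=
      Real.log_le_sub_one_of_pos (by positivity)
    have h2 : (1 - q ^ (k+1))⁻¹ - 1 = q^(k+1) / (1 - q ^ (k+1)) := by
      field_simp
      ring
    have h3 : q^(k+1) / (1 - q ^ (k+1)) ≤ q^(k+1) / (1-q) :=
      div_le_div_of_nonneg_left (by positivity) (by linarith) hlt
    have h4 : q^(k+1) / (1-q) = (q / (1-q)) * q ^ k := by ring
    linarith
  exact Summable.of_norm_bounded (((summable_geometric_of_lt_one hq0.le hq1).mul_left _)) hb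

lemma hasProd_factor (hq0 : 0 < q) (hq1 : q < 1) :
    HasProd (fun k : ℕ => 1 - q ^ (k+1)) (CC q) := by
  exact (Real.multipliable_of_summable_log (fun k => factor_pos hq0 hq1 k)
    (summable_log_factor hq0 hq1)).hasProd

lemma CC_pos (hq0 : 0 < q) (hq1 : q < 1) : 0 < CC q := by
  have := Real.rexp_tsum_eq_tprod (f := fun k => 1 - q ^ (k+1))
    (fun k => factor_pos hq0 hq1 k) (summable_log_factor hq0 hq1)
  rw [CC, ← this]
  exact Real.exp_pos _

lemma PrR_antitone (hq0 : 0 < q) (hq1 : q < 1) : Antitone (PrR q) := by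
  apply antitone_nat_of_succ_le
  intro n
  have : PrR q (n+1) = PrR q n * (1 - q ^ (n+1)) := Finset.prod_range_succ _ _
  rw [this]
  nlinarith [PrR_pos hq0 hq1 n, factor_pos hq0 hq1 n, factor_lt_one hq0 n]

lemma CC_le_PrR (hq0 : 0 < q) (hq1 : q < 1) (n : ℕ) : CC q ≤ PrR q n :=
  (PrR_antitone hq0 hq1).le_of_tendsto (hasProd_factor hq0 hq1).tendsto_prod_nat n

lemma term_norm_le (hq0 : 0 < q) (hq1 : q < 1) (n : ℕ) :
    ‖z ^ n / qPochC q q n‖ ≤ (CC q)⁻¹ * ‖z‖ ^ n := by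
  rw [norm_div, norm_pow, qPochC_eq, Complex.norm_real, Real.norm_eq_abs,
    abs_of_pos (PrR_pos hq0 hq1 n)]
  rw [div_le_iff₀ (PrR_pos hq0 hq1 n)]
  have hC := CC_pos hq0 hq1
  have h1 : (CC q)⁻¹ * ‖z‖ ^ n * CC q ≤ (CC q)⁻¹ * ‖z‖ ^ n * PrR q n := by
    apply mul_le_mul_of_nonneg_left (CC_le_PrR hq0 hq1 n)
    positivity
  calc ‖z‖ ^ n = (CC q)⁻¹ * ‖z‖ ^ n * CC q := by
        field_simp
    _ ≤ _ := h1

lemma summable_qexp (hq0 : 0 < q) (hq1 : q < 1) (hz : ‖z‖ < 1) :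
    Summable (fun n : ℕ => z ^ n / qPochC q q n) :=
  Summable.of_norm_bounded
    ((summable_geometric_of_lt_one (norm_nonneg z) hz).mul_left _)
    (term_norm_le hq0 hq1)

lemma qExp_sub_one_norm_le (hq0 : 0 < q) (hq1 : q < 1) (hz : ‖z‖ < 1) :
    ‖qExpC q z - 1‖ ≤ ‖z‖ * ((CC q)⁻¹ * (1 - ‖z‖)⁻¹) := by
  have S := summable_qexp (q := q) (z := z) hq0 hq1 hz
  have h0 : qExpC q z = z ^ 0 / qPochC q q 0 + ∑' n : ℕ, z ^ (n+1) / qPochC q q (n+1) := by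
    rw [qExpC]; exact Summable.tsum_eq_zero_add S
  have h00 : z ^ 0 / qPochC q q 0 = 1 := by simp [qPochC]
  rw [h0, h00, add_sub_cancel_left]
  have hS1 : Summable (fun n : ℕ => z ^ (n+1) / qPochC q q (n+1)) :=
    (summable_nat_add_iff 1).mpr S
  calc ‖∑' n : ℕ, z ^ (n+1) / qPochC q q (n+1)‖
      ≤ ∑' n : ℕ, ‖z ^ (n+1) / qPochC q q (n+1)‖ := norm_tsum_le_tsum_norm hS1.norm
    _ ≤ ∑' n : ℕ, ‖z‖ * ((CC q)⁻¹ * ‖z‖ ^ n) := by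
        apply Summable.tsum_le_tsum _ hS1.norm
        · exact ((summable_geometric_of_lt_one (norm_nonneg z) hz).mul_left _).mul_left _
        · intro n
          have := term_norm_le (q := q) (z := z) hq0 hq1 (n+1)
          calc ‖z ^ (n+1) / qPochC q q (n+1)‖ ≤ (CC q)⁻¹ * ‖z‖ ^ (n+1) := this
            _ = ‖z‖ * ((CC q)⁻¹ * ‖z‖ ^ n) := by ring
    _ = ‖z‖ * ((CC q)⁻¹ * ∑' n : ℕ, ‖z‖ ^ n) := by
        rw [tsum_mul_left, tsum_mul_left]
    _ = ‖z‖ * ((CC q)⁻¹ * (1 - ‖z‖)⁻¹) := by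
        rw [tsum_geometric_of_lt_one (norm_nonneg z) hz]

lemma qExp_funeq (hq0 : 0 < q) (hq1 : q < 1) (hz : ‖z‖ < 1) :
    (1 - z) * qExpC q z = qExpC q ((q : ℂ) * z) := by
  have S := summable_qexp (q := q) (z := z) hq0 hq1 hz
  have hqz : ‖(q : ℂ) * z‖ < 1 := by
    rw [norm_mul, Complex.norm_real, Real.norm_eq_abs, abs_of_pos hq0]
    nlinarith [norm_nonneg z]
  have Sq := summable_qexp (q := q) (z := (q : ℂ) * z) hq0 hq1 hqz
  have S1 : Summable (fun n : ℕ => z ^ (n+1) / qPochC q q (n+1)) :=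
    (summable_nat_add_iff 1).mpr S
  have S2 : Summable (fun n : ℕ => z ^ (n+1) / qPochC q q n) := by
    have := S.mul_left z
    apply this.congr
    intro n; rw [← mul_div_assoc, pow_succ, mul_comm (z^n) z]
  have poch_succ : ∀ n : ℕ, qPochC q q (n+1) = qPochC q q n * (1 - (q:ℂ) * (q:ℂ)^n) :=
    fun n => Finset.prod_range_succ _ _
  have key : ∀ n : ℕ, z ^ (n+1) / qPochC q q (n+1) - z ^ (n+1) / qPochC q q n
      = ((q:ℂ) * z) ^ (n+1) / qPochC q q (n+1) := by
    intro n
    have hPn := qPochC_ne hq0 hq1 n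
    have hPn1 := qPochC_ne hq0 hq1 (n+1)
    rw [poch_succ n] at hPn1 ⊢
    have hfac : (1 - (q:ℂ) * (q:ℂ)^n) ≠ 0 := by
      intro h; apply hPn1; rw [h, mul_zero]
    field_simp
    ring
  have expand : qExpC q z = 1 + ∑' n : ℕ, z ^ (n+1) / qPochC q q (n+1) := by
    rw [qExpC, Summable.tsum_eq_zero_add S]; simp [qPochC]
  have expandq : qExpC q ((q:ℂ) * z)
      = 1 + ∑' n : ℕ, ((q:ℂ) * z) ^ (n+1) / qPochC q q (n+1) := by
    rw [qExpC, Summable.tsum_eq_zero_add Sq]; simp [qPochC]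
  have zmul : z * qExpC q z = ∑' n : ℕ, z ^ (n+1) / qPochC q q n := by
    rw [qExpC, ← tsum_mul_left]
    congr 1; funext n; rw [← mul_div_assoc, pow_succ, mul_comm (z^n) z]
  have : (1 - z) * qExpC q z = qExpC q z - z * qExpC q z := by ring
  rw [this, zmul, expand, expandq]
  rw [add_sub_assoc, ← Summable.tsum_sub S1 S2]
  congr 1
  exact tsum_congr key

lemma norm_q_pow_lt (hq0 : 0 < q) (hq1 : q < 1) (m : ℕ) : ‖((q:ℂ))^(m+1)‖ < 1 := by
  rw [norm_pow, Complex.norm_real, Real.norm_eq_abs, abs_of_pos hq0]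
  exact pow_lt_one₀ hq0.le hq1 (Nat.succ_ne_zero m)

lemma qExp_pow_succ (hq0 : 0 < q) (hq1 : q < 1) (m : ℕ) :
    qExpC q ((q:ℂ)^(m+1)) = qExpC q q * (PrR q m : ℂ) := by
  induction m with
  | zero => simp [PrR]
  | succ m ih =>
    have h := qExp_funeq hq0 hq1 (norm_q_pow_lt hq0 hq1 m)
    have harg : (q:ℂ) * (q:ℂ)^(m+1) = (q:ℂ)^(m+2) := by ring
    rw [harg] at h
    rw [← h, ih, show PrR q (m+1) = PrR q m * (1 - q^(m+1)) from Finset.prod_range_succ _ _]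
    push_cast
    ring

lemma tendsto_qExp_pow (hq0 : 0 < q) (hq1 : q < 1) :
    Filter.Tendsto (fun m => qExpC q ((q:ℂ)^(m+1))) Filter.atTop (nhds 1) := by
  rw [← tendsto_sub_nhds_zero_iff]
  have hg : Filter.Tendsto (fun m : ℕ => q^(m+1) * ((CC q)⁻¹ * (1-q)⁻¹)) Filter.atTop (nhds 0) := by
    have h0 : Filter.Tendsto (fun m : ℕ => q ^ m) Filter.atTop (nhds 0) :=
      tendsto_pow_atTop_nhds_zero_of_lt_one hq0.le hq1
    have h1 := h0.mul_const (q * ((CC q)⁻¹ * (1-q)⁻¹))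
    rw [zero_mul] at h1
    exact h1.congr (fun m => by ring)
  apply squeeze_zero_norm _ hg
  · intro m
    have h := qExp_sub_one_norm_le (q := q) (z := (q:ℂ)^(m+1)) hq0 hq1 (norm_q_pow_lt hq0 hq1 m)
    have hnorm : ‖((q:ℂ))^(m+1)‖ = q^(m+1) := by
      rw [norm_pow, Complex.norm_real, Real.norm_eq_abs, abs_of_pos hq0]
    rw [hnorm] at h
    refine h.trans ?_
    have hC := CC_pos hq0 hq1
    have h1 : q^(m+1) ≤ q := by
      calc q ^ (m+1) ≤ q ^ 1 := pow_le_pow_of_le_one hq0.le hq1.le (by omega)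
      _ = q := pow_one q
    have h2 : (1 - q^(m+1))⁻¹ ≤ (1-q)⁻¹ := by
      apply inv_anti₀ (by linarith)
      linarith
    have hp : (0:ℝ) < q^(m+1) := pow_pos hq0 _
    have := mul_le_mul_of_nonneg_left h2 (le_of_lt (inv_pos.mpr hC))
    nlinarith [inv_pos.mpr hC, inv_pos.mpr (show (0:ℝ) < 1 - q^(m+1) by nlinarith [pow_lt_one₀ hq0.le hq1 (Nat.succ_ne_zero m)])]

lemma tendsto_PrR (hq0 : 0 < q) (hq1 : q < 1) :
    Filter.Tendsto (fun m => ((PrR q m : ℝ) : ℂ)) Filter.atTop (nhds ((CC q : ℝ) : ℂ)) := by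
  have h : Filter.Tendsto (PrR q) Filter.atTop (nhds (CC q)) := by
    have := (hasProd_factor hq0 hq1).tendsto_prod_nat
    exact this
  exact (Complex.continuous_ofReal.continuousAt).tendsto.comp h

lemma euler_base (hq0 : 0 < q) (hq1 : q < 1) : qExpC q q * (CC q : ℂ) = 1 := by
  have hA := tendsto_qExp_pow hq0 hq1
  have hB : Filter.Tendsto (fun m => qExpC q ((q:ℂ)^(m+1))) Filter.atTop
      (nhds (qExpC q q * (CC q : ℂ))) := by
    have := (tendsto_PrR hq0 hq1).const_mul (qExpC q q)
    exact this.congr (fun m => (qExp_pow_succ hq0 hq1 m).symm)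
  exact (tendsto_nhds_unique hB hA)

lemma euler (hq0 : 0 < q) (hq1 : q < 1) (n : ℕ) :
    (CC q : ℂ) * qExpC q ((q:ℂ)^(n+1)) = (PrR q n : ℂ) := by
  rw [qExp_pow_succ hq0 hq1 n]
  have := euler_base hq0 hq1
  calc (CC q : ℂ) * (qExpC q q * (PrR q n : ℂ))
      = (qExpC q q * (CC q : ℂ)) * (PrR q n : ℂ) := by ring
    _ = (PrR q n : ℂ) := by rw [this, one_mul]

section key
variable (hq0 : 0 < q) (hq1 : q < 1) (hz : ‖z‖ < 1)

/-- the double-indexed family -/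
noncomputable def FF (q : ℝ) (z : ℂ) (p : ℕ × ℕ) : ℂ :=
  (q:ℂ)^p.1 * (z * (q:ℂ)^p.1)^p.2 / (qPochC q q p.1 * qPochC q q p.2)

lemma norm_q_lt (hq0 : 0 < q) (hq1 : q < 1) (k : ℕ) : ‖((q:ℂ))^k‖ ≤ 1 := by
  rw [norm_pow, Complex.norm_real, Real.norm_eq_abs, abs_of_pos hq0]
  exact pow_le_one₀ hq0.le hq1.le

lemma summable_FF (hq0 : 0 < q) (hq1 : q < 1) (hz : ‖z‖ < 1) : Summable (FF q z) := by
  have hC := CC_pos hq0 hq1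
  apply Summable.of_norm_bounded
    (g := fun p : ℕ × ℕ => ((CC q)⁻¹ * q ^ p.1) * ((CC q)⁻¹ * ‖z‖ ^ p.2))
  · exact (((summable_geometric_of_lt_one hq0.le hq1).mul_left _).mul_of_nonneg
      ((summable_geometric_of_lt_one (norm_nonneg z) hz).mul_left _)
      (fun k => by positivity) (fun n => by positivity))
  · rintro ⟨k, n⟩
    have h1 := CC_le_PrR hq0 hq1 k
    have h2 := CC_le_PrR hq0 hq1 n
    have hk := PrR_pos hq0 hq1 k
    have hn := PrR_pos hq0 hq1 n
    simp only [FF, norm_div, norm_mul, norm_pow, Complex.norm_real, Real.norm_eq_abs,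
      abs_of_pos hq0, qPochC_eq]
    rw [abs_of_pos hk, abs_of_pos hn]
    have hqk1 : q ^ k ≤ 1 := pow_le_one₀ hq0.le hq1.le
    have hzq : ‖z‖ * q ^ k ≤ ‖z‖ := by nlinarith [norm_nonneg z, pow_pos hq0 k]
    have hzqn : (‖z‖ * q ^ k) ^ n ≤ ‖z‖ ^ n :=
      pow_le_pow_left₀ (by positivity) hzq n
    calc q ^ k * (‖z‖ * q ^ k) ^ n / (PrR q k * PrR q n)
        ≤ q ^ k * ‖z‖ ^ n / (CC q * CC q) := by
          apply div_le_div₀ (by positivity)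
          · exact mul_le_mul_of_nonneg_left hzqn (by positivity)
          · positivity
          · exact mul_le_mul h1 h2 hC.le hk.le
      _ = (CC q)⁻¹ * q ^ k * ((CC q)⁻¹ * ‖z‖ ^ n) := by
          field_simp

lemma summable_A (hq0 : 0 < q) (hq1 : q < 1) (hz : ‖z‖ < 1) :
    Summable (fun k : ℕ => (q:ℂ)^k * qExpC q (z * (q:ℂ)^k) / qPochC q q k) := by
  have := (summable_FF hq0 hq1 hz).prod
  apply this.congr
  intro k
  rw [qExpC, ← tsum_mul_left, ← tsum_div_const]
  apply tsum_congr
  intro n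
  simp only [FF]
  field_simp

lemma key (hq0 : 0 < q) (hq1 : q < 1) (hz : ‖z‖ < 1) :
    (CC q : ℂ) * ∑' k : ℕ, (q:ℂ)^k * qExpC q (z * (q:ℂ)^k) / qPochC q q k = (1 - z)⁻¹ := by
  have hSF := summable_FF hq0 hq1 hz
  -- rewrite each term as inner tsum
  have step1 : ∑' k : ℕ, (q:ℂ)^k * qExpC q (z * (q:ℂ)^k) / qPochC q q k
      = ∑' (k : ℕ) (n : ℕ), FF q z (k, n) := by
    apply tsum_congr
    intro k
    rw [qExpC, ← tsum_mul_left, ← tsum_div_const]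
    apply tsum_congr
    intro n
    simp only [FF]
    field_simp
  have step2 : ∑' (k : ℕ) (n : ℕ), FF q z (k, n) = ∑' (n : ℕ) (k : ℕ), FF q z (k, n) := by
    exact (Summable.tsum_comm' (f := fun k n => FF q z (k, n)) hSF (fun k => hSF.prod_factor k)
      (fun n => (hSF.prod_symm).prod_factor n)).symm
  have step3 : ∀ n : ℕ, ∑' (k : ℕ), FF q z (k, n)
      = z ^ n / qPochC q q n * qExpC q ((q:ℂ)^(n+1)) := by
    intro n
    rw [qExpC, ← tsum_mul_left]
    apply tsum_congr
    intro k
    simp only [FF]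
    have : ((q:ℂ)^(n+1))^k = (q:ℂ)^k * ((q:ℂ)^k)^n := by
      rw [← pow_mul, ← pow_mul, ← pow_add]
      congr 1
      ring
    rw [this]
    have hPk := qPochC_ne hq0 hq1 k
    have hPn := qPochC_ne hq0 hq1 n
    field_simp
    ring
  rw [step1, step2]
  rw [← tsum_mul_left]
  have step4 : ∀ n : ℕ, (CC q : ℂ) * ∑' (k : ℕ), FF q z (k, n) = z ^ n := by
    intro n
    rw [step3 n]
    have := euler hq0 hq1 n
    have hPn := qPochC_ne hq0 hq1 n
    calc (CC q : ℂ) * (z ^ n / qPochC q q n * qExpC q ((q:ℂ)^(n+1)))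
        = z ^ n / qPochC q q n * ((CC q : ℂ) * qExpC q ((q:ℂ)^(n+1))) := by ring
      _ = z ^ n / qPochC q q n * (PrR q n : ℂ) := by rw [this]
      _ = z ^ n := by rw [← qPochC_eq]; field_simp
  calc ∑' (n : ℕ), (CC q : ℂ) * ∑' (k : ℕ), FF q z (k, n)
      = ∑' (n : ℕ), z ^ n := tsum_congr step4
    _ = (1 - z)⁻¹ := tsum_geometric_of_norm_lt_one hz

end key


end Auxiliary

/-- For `0 < q < 1`, `u, v > 0`, `a ∈ ℝ` with `|a u| < v`,
`N_q(cos_q(a x))(u;v) = v/(v² + a² u²)`. -/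
theorem qNatural_qCos (q a u v : ℝ) (hq0 : 0 < q) (hq1 : q < 1)
    (hu : 0 < u) (hv : 0 < v) (h : |a * u| < v) :
    qNaturalC q (fun x => qCos q (a * x)) u v
      = (v : ℝ) / ((v ^ 2 + a ^ 2 * u ^ 2 : ℝ) : ℂ) := by
  have hC := CC_pos hq0 hq1
  set t : ℝ := a * u / v with ht
  have hvne : v ≠ 0 := hv.ne'
  have htlt : |t| < 1 := by
    rw [ht, abs_div, abs_of_pos hv, div_lt_one hv]
    exact h
  have hz1 : ‖I * (t:ℂ)‖ < 1 := by
    rw [norm_mul, Complex.norm_I, one_mul, Complex.norm_real, Real.norm_eq_abs]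
    exact htlt
  have hz2 : ‖-(I * (t:ℂ))‖ < 1 := by rwa [norm_neg]
  -- identify the tprod
  have htprod : (∏' k : ℕ, (1 - (q:ℂ) * (q:ℂ)^k)) = ((CC q : ℝ) : ℂ) := by
    have h1 : HasProd (fun k : ℕ => ((1 - q^(k+1) : ℝ) : ℂ)) ((CC q : ℝ) : ℂ) :=
      (hasProd_factor hq0 hq1).map Complex.ofRealHom Complex.continuous_ofReal
    have h2 : (fun k : ℕ => ((1 - q^(k+1) : ℝ) : ℂ)) = fun k : ℕ => 1 - (q:ℂ) * (q:ℂ)^k := by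
      funext k; push_cast; ring
    rw [h2] at h1
    exact h1.tprod_eq
  -- rewrite the summand
  have hterm : ∀ k : ℕ, (q:ℂ)^k * qCos q ((a:ℂ) * ((u / v * q ^ k : ℝ) : ℂ)) / qPochC q q k
      = ((q:ℂ)^k * qExpC q ((I * (t:ℂ)) * (q:ℂ)^k) / qPochC q q k
        + (q:ℂ)^k * qExpC q ((-(I * (t:ℂ))) * (q:ℂ)^k) / qPochC q q k) / 2 := by
    intro k
    have harg : (a:ℂ) * ((u / v * q ^ k : ℝ) : ℂ) = (t:ℂ) * (q:ℂ)^k := by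
      rw [ht]; push_cast; field_simp
    rw [qCos, harg]
    have e2 : -(I * ((t:ℂ) * (q:ℂ)^k)) = (-(I * (t:ℂ))) * (q:ℂ)^k := by ring
    have e1 : I * ((t:ℂ) * (q:ℂ)^k) = (I * (t:ℂ)) * (q:ℂ)^k := by ring
    rw [e2, e1]
    ring
  rw [qNaturalC, htprod]
  have hsum : ∑' k : ℕ, (q:ℂ)^k * qCos q ((a:ℂ) * ((u / v * q ^ k : ℝ) : ℂ)) / qPochC q q k
      = ((∑' k : ℕ, (q:ℂ)^k * qExpC q ((I * (t:ℂ)) * (q:ℂ)^k) / qPochC q q k)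
        + ∑' k : ℕ, (q:ℂ)^k * qExpC q ((-(I * (t:ℂ))) * (q:ℂ)^k) / qPochC q q k) / 2 := by
    rw [← Summable.tsum_add (summable_A hq0 hq1 hz1) (summable_A hq0 hq1 hz2), ← tsum_div_const]
    exact tsum_congr hterm
  rw [hsum]
  have e1 := key hq0 hq1 hz1
  have e2 := key hq0 hq1 hz2
  set S1 := ∑' k : ℕ, (q:ℂ)^k * qExpC q ((I * (t:ℂ)) * (q:ℂ)^k) / qPochC q q k
  set S2 := ∑' k : ℕ, (q:ℂ)^k * qExpC q ((-(I * (t:ℂ))) * (q:ℂ)^k) / qPochC q q k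
  have expand : ((CC q : ℝ) : ℂ) / (v:ℂ) * ((S1 + S2) / 2)
      = (((CC q : ℝ):ℂ) * S1 + ((CC q : ℝ):ℂ) * S2) / (2 * (v:ℂ)) := by ring
  rw [expand, e1, e2]
  -- final algebra
  have h1 : (1 : ℂ) - I * (t:ℂ) ≠ 0 := by
    intro hh
    have := congrArg Complex.re hh
    simp at this
  have h2 : (1 : ℂ) - (-(I * (t:ℂ))) ≠ 0 := by
    intro hh
    have := congrArg Complex.re hh
    simp at this
  have hvC : (v:ℂ) ≠ 0 := by exact_mod_cast hvne
  have hd : ((v ^ 2 + a ^ 2 * u ^ 2 : ℝ) : ℂ) ≠ 0 := by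
    have : (0:ℝ) < v ^ 2 + a ^ 2 * u ^ 2 := by positivity
    exact_mod_cast this.ne'
  rw [ht] at *
  field_simp
  push_cast
  have hA : (v:ℂ) - I * (a:ℂ) * (u:ℂ) ≠ 0 := by
    intro hh
    have := congrArg Complex.re hh
    simp at this
    exact hvne this
  have hB : (v:ℂ) + I * (a:ℂ) * (u:ℂ) ≠ 0 := by
    intro hh
    have := congrArg Complex.re hh
    simp at this
    exact hvne this
  have hD : ((v:ℂ)^2 + (a:ℂ)^2 * (u:ℂ)^2) ≠ 0 := by
    push_cast at hd
    exact hd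
  have hA' : (v:ℂ) - I * ((a:ℂ) * (u:ℂ)) ≠ 0 := by
    intro hh; apply hA; rw [← hh]; ring
  have hB' : (v:ℂ) + I * ((a:ℂ) * (u:ℂ)) ≠ 0 := by
    intro hh; apply hB; rw [← hh]; ring
  have hX : (a:ℂ) * (u:ℂ) / (v:ℂ) * (v:ℂ) = (a:ℂ) * (u:ℂ) := by field_simp
  linear_combination (2 * ((a:ℂ) * (u:ℂ) / (v:ℂ))^2 * (v:ℂ)^2) * Complex.I_sq
    + (-2 * ((a:ℂ) * (u:ℂ) / (v:ℂ) * (v:ℂ) + (a:ℂ) * (u:ℂ))) * hX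
end
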